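/- Let H be an M-quasisymmetric homeomorphism of [0,1] with H(0)=0 and H(1)=1, and set τ_n = max{(M/(M+1))^n − 1/2^n, 1/2^n − (1/(M+1))^n}. Then for every n ≥ 1, max over 0 ≤ i ≤ 2^n of |H(i/2^n) − i/2^n| is at most the sum of τ_k for k = 1 to n. -/

import Mathlib

open Set Finset

/-- With τ_n = max{(M/(M+1))^n − 1/2^n, 1/2^n − (1/(M+1))^n},
every M-quasisymmetric homeomorphism H of [0,1] fixing 0 and 1 satisfies, for n ≥ 1,
max_{0 ≤ i ≤ 2^n} |H(i/2^n) − i/2^n| ≤ ∑_{k=1}^n τ_k. -/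
lemma qs_mid (M : ℝ) (hM : 1 ≤ M) (H : ℝ → ℝ)
    (Hmono : StrictMonoOn H (Set.Icc (0:ℝ) 1))
    (hqs : ∀ x t : ℝ, 0 < t → x - t ∈ Set.Icc (0:ℝ) 1 → x + t ∈ Set.Icc (0:ℝ) 1 →
      M⁻¹ ≤ (H (x + t) - H x) / (H x - H (x - t)) ∧
      (H (x + t) - H x) / (H x - H (x - t)) ≤ M)
    (a b : ℝ) (ha : 0 ≤ a) (hb : b ≤ 1) (hab : a < b) :
    ∃ θ : ℝ, 1/(M+1) ≤ θ ∧ θ ≤ M/(M+1) ∧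
      H ((a+b)/2) = H a + θ * (H b - H a) := by
  have hM1 : (0:ℝ) < M + 1 := by linarith
  have hM0 : (0:ℝ) < M := by linarith
  set m := (a+b)/2 with hm
  have hma : a < m := by rw [hm]; linarith
  have hmb : m < b := by rw [hm]; linarith
  have haI : a ∈ Set.Icc (0:ℝ) 1 := ⟨ha, by linarith⟩
  have hbI : b ∈ Set.Icc (0:ℝ) 1 := ⟨by linarith, hb⟩
  have hmI : m ∈ Set.Icc (0:ℝ) 1 := ⟨by linarith [haI.1], by linarith [hbI.2]⟩
  have hu : 0 < H m - H a := sub_pos.mpr (Hmono haI hmI hma)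
  have hv : 0 < H b - H m := sub_pos.mpr (Hmono hmI hbI hmb)
  have ht : (0:ℝ) < (b - a)/2 := by linarith
  have h1 : m - (b-a)/2 = a := by rw [hm]; ring
  have h2 : m + (b-a)/2 = b := by rw [hm]; ring
  have hq := hqs m ((b-a)/2) ht (by rw [h1]; exact haI) (by rw [h2]; exact hbI)
  rw [h1, h2] at hq
  have hv2 : H b - H m ≤ M * (H m - H a) := by
    have := hq.2
    rwa [div_le_iff₀ hu] at this
  have hv1 : M⁻¹ * (H m - H a) ≤ H b - H m := by
    have := hq.1
    rwa [le_div_iff₀ hu] at this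
  have hv1' : H m - H a ≤ M * (H b - H m) := by
    rw [inv_mul_le_iff₀ hM0] at hv1; linarith
  have hw : 0 < H b - H a := by linarith
  refine ⟨(H m - H a) / (H b - H a), ?_, ?_, ?_⟩
  · rw [div_le_div_iff₀ hM1 hw]; nlinarith
  · rw [div_le_div_iff₀ hw hM1]; nlinarith
  · rw [div_mul_cancel₀ _ (ne_of_gt hw)]; ring


theorem stmt3 (M : ℝ) (hM : 1 ≤ M) (H : ℝ → ℝ)
    (Hmono : StrictMonoOn H (Set.Icc (0:ℝ) 1))
    (Hcont : ContinuousOn H (Set.Icc (0:ℝ) 1))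
    (H0 : H 0 = 0) (H1 : H 1 = 1)
    (hqs : ∀ x t : ℝ, 0 < t → x - t ∈ Set.Icc (0:ℝ) 1 → x + t ∈ Set.Icc (0:ℝ) 1 →
      M⁻¹ ≤ (H (x + t) - H x) / (H x - H (x - t)) ∧
      (H (x + t) - H x) / (H x - H (x - t)) ≤ M)
    (τ : ℕ → ℝ)
    (hτ : ∀ n : ℕ, τ n = max ((M / (M + 1)) ^ n - 1 / 2 ^ n)
                            (1 / 2 ^ n - (1 / (M + 1)) ^ n)) :
    ∀ n : ℕ, 1 ≤ n → ∀ i : ℕ, i ≤ 2 ^ n →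
      |H ((i : ℝ) / 2 ^ n) - (i : ℝ) / 2 ^ n| ≤ ∑ k ∈ Finset.Icc 1 n, τ k := by
  have hM1 : (0:ℝ) < M + 1 := by linarith
  have hhalf1 : (1:ℝ)/2 ≤ M/(M+1) := by rw [div_le_div_iff₀ (by norm_num) hM1]; linarith
  have hhalf2 : (1:ℝ)/(M+1) ≤ 1/2 := by rw [div_le_div_iff₀ hM1 (by norm_num)]; linarith
  -- τ n is nonneg
  have hτ0 : ∀ n : ℕ, 0 ≤ τ n := by
    intro n
    rw [hτ n]
    refine le_max_of_le_left ?_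
    have : (1:ℝ)/2^n ≤ (M/(M+1))^n := by
      have := pow_le_pow_left₀ (by norm_num : (0:ℝ) ≤ 1/2) hhalf1 n
      simpa [div_pow, one_pow] using this
    linarith
  -- key recursion fact: max (M/(M+1)-1/2) (1/2-1/(M+1)) / 2^n ≤ τ (n+1)
  have hc : ∀ n : ℕ, max (M/(M+1) - 1/2) (1/2 - 1/(M+1)) / 2^n ≤ τ (n+1) := by
    intro n
    have h2n : (0:ℝ) < 2^n := by positivity
    rw [hτ (n+1), div_le_iff₀ h2n]
    have e1 : (M/(M+1) - 1/2) ≤ ((M / (M + 1)) ^ (n+1) - 1 / 2 ^ (n+1)) * 2^n := by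
      have hpow : (1:ℝ)/2^n ≤ (M/(M+1))^n := by
        have := pow_le_pow_left₀ (by norm_num : (0:ℝ) ≤ 1/2) hhalf1 n
        simpa [div_pow, one_pow] using this
      have hMn : (0:ℝ) < M/(M+1) := by positivity
      have hmul : (M/(M+1)) * (1/2^n) ≤ (M/(M+1)) * (M/(M+1))^n :=
        mul_le_mul_of_nonneg_left hpow (le_of_lt hMn)
      have hmul2 := mul_le_mul_of_nonneg_right hmul (le_of_lt h2n)
      have heq : (M/(M+1)) * (1/2^n) * 2^n = M/(M+1) := by field_simp
      rw [heq] at hmul2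
      have hexp : (M/(M+1))^(n+1) = (M/(M+1)) * (M/(M+1))^n := by ring
      rw [hexp]
      have h2 : ((M / (M + 1)) * (M / (M + 1)) ^ n - 1 / 2 ^ (n+1)) * 2^n
          = (M/(M+1)) * (M/(M+1))^n * 2^n - 1/2 := by
        field_simp; ring
      rw [h2]
      linarith
    have e2 : (1/2 - 1/(M+1)) ≤ (1 / 2 ^ (n+1) - (1 / (M + 1)) ^ (n+1)) * 2^n := by
      have hpow : ((1:ℝ)/(M+1))^n ≤ 1/2^n := by
        have := pow_le_pow_left₀ (by positivity : (0:ℝ) ≤ 1/(M+1)) hhalf2 n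
        simpa [div_pow, one_pow] using this
      have hp : (0:ℝ) < 1/(M+1) := by positivity
      have h3 : (1/(M+1)) * (1/(M+1))^n ≤ (1/(M+1)) * (1/2^n) :=
        mul_le_mul_of_nonneg_left hpow (le_of_lt hp)
      have hmul2 := mul_le_mul_of_nonneg_right h3 (le_of_lt h2n)
      have heq : (1/(M+1)) * (1/2^n) * 2^n = 1/(M+1) := by field_simp
      rw [heq] at hmul2
      have hexp : ((1:ℝ)/(M+1))^(n+1) = (1/(M+1)) * (1/(M+1))^n := by ring
      rw [hexp]
      have h2 : ((1:ℝ) / 2 ^ (n+1) - 1 / (M + 1) * (1 / (M + 1)) ^ n) * 2^n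
          = 1/2 - (1/(M+1)) * (1/(M+1))^n * 2^n := by
        field_simp; ring
      rw [h2]
      linarith
    rcases max_cases (M/(M+1) - 1/2) (1/2 - 1/(M+1)) with ⟨h, _⟩ | ⟨h, _⟩ <;> rw [h]
    · exact le_trans e1 (mul_le_mul_of_nonneg_right (le_max_left _ _) h2n.le)
    · exact le_trans e2 (mul_le_mul_of_nonneg_right (le_max_right _ _) h2n.le)
  -- main induction: prove for all n (n = 0 included, empty sum)
  suffices h : ∀ n : ℕ, ∀ i : ℕ, i ≤ 2 ^ n →
      |H ((i : ℝ) / 2 ^ n) - (i : ℝ) / 2 ^ n| ≤ ∑ k ∈ Finset.Icc 1 n, τ k by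
    intro n _ i hi; exact h n i hi
  intro n
  induction n with
  | zero =>
    intro i hi
    interval_cases i <;> simp [H0, H1]
  | succ n ih =>
    intro i hi
    have hsum : ∑ k ∈ Finset.Icc 1 (n+1), τ k = (∑ k ∈ Finset.Icc 1 n, τ k) + τ (n+1) :=
      Finset.sum_Icc_succ_top (by omega) τ
    have h2n : (0:ℝ) < 2^n := by positivity
    rcases Nat.even_or_odd i with ⟨j, hj⟩ | ⟨j, hj⟩
    · -- even: i = j + j
      have hj2 : j ≤ 2^n := by omega
      have hx : (i : ℝ) / 2 ^ (n+1) = (j : ℝ) / 2 ^ n := by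
        subst hj; push_cast; field_simp; ring
      rw [hsum, hx]
      have := ih j hj2
      linarith [hτ0 (n+1)]
    · -- odd: i = 2j+1
      have hj2 : j < 2^n := by omega
      set a : ℝ := (j : ℝ) / 2^n with ha
      set b : ℝ := ((j:ℝ) + 1) / 2^n with hb
      have hx : (i : ℝ) / 2 ^ (n+1) = (a + b) / 2 := by
        subst hj; rw [ha, hb]; push_cast; field_simp; ring
      have ha0 : 0 ≤ a := by positivity
      have hb1 : b ≤ 1 := by
        rw [hb, div_le_one h2n]
        have : (j:ℝ) + 1 ≤ 2^n := by exact_mod_cast hj2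
        linarith
      have hab : a < b := by
        rw [ha, hb, div_lt_div_iff₀ h2n h2n]; nlinarith
      obtain ⟨θ, hθ1, hθ2, hθ⟩ := qs_mid M hM H Hmono hqs a b ha0 hb1 hab
      have hθ0 : 0 ≤ θ := le_trans (by positivity) hθ1
      have hθle1 : θ ≤ 1 := le_trans hθ2 (by rw [div_le_one hM1]; linarith)
      have iha := ih j hj2.le
      rw [← ha] at iha
      have ihb : |H b - b| ≤ ∑ k ∈ Finset.Icc 1 n, τ k := by
        have h := ih (j+1) hj2
        have hcast : ((j+1:ℕ):ℝ) = (j:ℝ)+1 := by push_cast; ring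
        rw [hcast] at h
        rwa [← hb] at h
      -- decompose
      set S := ∑ k ∈ Finset.Icc 1 n, τ k with hS
      have hba : b - a = 1/2^n := by rw [ha, hb]; field_simp; ring
      have key : H ((a+b)/2) - (a+b)/2
          = (1-θ) * (H a - a) + θ * (H b - b) + (θ - 1/2) * (b - a) := by
        rw [hθ]; ring
      have habs : |H ((a+b)/2) - (a+b)/2|
          ≤ (1-θ) * |H a - a| + θ * |H b - b| + |θ - 1/2| * (b - a) := by
        rw [key]
        calc |(1-θ) * (H a - a) + θ * (H b - b) + (θ - 1/2) * (b - a)|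
            ≤ |(1-θ) * (H a - a) + θ * (H b - b)| + |(θ - 1/2) * (b - a)| := abs_add_le _ _
          _ ≤ |(1-θ) * (H a - a)| + |θ * (H b - b)| + |(θ - 1/2) * (b - a)| := by
              linarith [abs_add_le ((1-θ) * (H a - a)) (θ * (H b - b))]
          _ = (1-θ) * |H a - a| + θ * |H b - b| + |θ - 1/2| * (b - a) := by
              rw [abs_mul, abs_mul, abs_mul, abs_of_nonneg (by linarith : (0:ℝ) ≤ 1-θ),
                abs_of_nonneg hθ0, abs_of_nonneg (by linarith : (0:ℝ) ≤ b - a)]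
      have hθhalf : |θ - 1/2| ≤ max (M/(M+1) - 1/2) (1/2 - 1/(M+1)) := by
        rw [abs_le]
        constructor
        · have := le_max_right (M/(M+1) - 1/2) (1/2 - 1/(M+1)); linarith
        · have := le_max_left (M/(M+1) - 1/2) (1/2 - 1/(M+1)); linarith
      have hcn := hc n
      have hmax0 : 0 ≤ max (M/(M+1) - 1/2) (1/2 - 1/(M+1)) :=
        le_trans (abs_nonneg _) hθhalf
      have hterm : |θ - 1/2| * (b - a) ≤ τ (n+1) := by
        rw [hba]
        calc |θ - 1/2| * (1/2^n) ≤ max (M/(M+1) - 1/2) (1/2 - 1/(M+1)) * (1/2^n) :=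
              mul_le_mul_of_nonneg_right hθhalf (by positivity)
          _ = max (M/(M+1) - 1/2) (1/2 - 1/(M+1)) / 2^n := by ring
          _ ≤ τ (n+1) := hcn
      have hcomb : (1-θ) * |H a - a| + θ * |H b - b| ≤ S := by
        have h1 : (1-θ) * |H a - a| ≤ (1-θ) * S :=
          mul_le_mul_of_nonneg_left iha (by linarith)
        have h2 : θ * |H b - b| ≤ θ * S :=
          mul_le_mul_of_nonneg_left ihb hθ0
        have h3 : (1-θ) * S + θ * S = S := by ring
        linarith
      rw [hsum, hx]
      linarith
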